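/- Suppose the linear operator T : ℝ_n[z] → ℝ[z] maps every hyperbolic polynomial of degree at most n to a hyperbolic polynomial. Then (extending T to ℂ_n[z] by complex linearity) either T maps every stable polynomial of degree at most n to a stable polynomial or to 0, or T maps every stable polynomial of degree at most n into H₁⁻(ℂ) ∪ {0}, or the range of T has dimension at most two and T is of the form T(f) = α(f)P + β(f)Q for all f ∈ ℝ_n[z], where α, β : ℝ_n[z] → ℝ are linear functionals and P, Q are hyperbolic polynomials whose zeros interlace. -/

import Mathlib

open Polynomial

noncomputable section

/-- A univariate complex polynomial is stable if it does not vanish on the open upper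
half-plane. -/
def UStable (f : Polynomial ℂ) : Prop := ∀ z : ℂ, 0 < z.im → f.eval z ≠ 0

/-- A real univariate polynomial is hyperbolic if it is nonzero and all its (complex)
zeros are real. -/
def Hyperbolic (p : Polynomial ℝ) : Prop :=
  p ≠ 0 ∧ ∀ z : ℂ, Polynomial.aeval z p = 0 → z.im = 0

/-- Merge two lists alternately: `mergeAlt [a1,a2,...] [b1,b2,...] = [a1,b1,a2,b2,...]`. -/
def mergeAlt : List ℝ → List ℝ → List ℝ
  | [], l => l
  | a :: as, l => a :: mergeAlt l as
termination_by a b => a.length + b.length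
decreasing_by simp [List.length]; omega

/-- `AltSeq α β` : the alternation α₁ ≤ β₁ ≤ α₂ ≤ β₂ ≤ ⋯ holds (lengths differ by at
most one, starting with α). -/
def AltSeq (α β : List ℝ) : Prop :=
  (α.length = β.length ∨ α.length = β.length + 1) ∧
    List.Chain' (· ≤ ·) (mergeAlt α β)

/-- The zeros of two real polynomials interlace. -/
def ZerosInterlace (P Q : Polynomial ℝ) : Prop :=
  (P.degree ≤ 1 ∧ Q.degree ≤ 1) ∨
    ∃ α β : List ℝ, P.roots = ↑α ∧ Q.roots = ↑β ∧ (AltSeq α β ∨ AltSeq β α)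

/-- Evaluation of a bivariate polynomial `F ∈ ℂ[z][w]` at `(z, w)`. -/
def evalBiv (F : Polynomial (Polynomial ℂ)) (z w : ℂ) : ℂ :=
  (F.map (Polynomial.evalRingHom z)).eval w

/-- A bivariate polynomial is stable if it does not vanish when both coordinates are in
the open upper half-plane. -/
def BStable (F : Polynomial (Polynomial ℂ)) : Prop :=
  ∀ z w : ℂ, 0 < z.im → 0 < w.im → evalBiv F z w ≠ 0

/-- The canonical map `ℝ[z][w] → ℂ[z][w]`. -/
def bivToC (F : Polynomial (Polynomial ℝ)) : Polynomial (Polynomial ℂ) :=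
  F.map (Polynomial.mapRingHom (algebraMap ℝ ℂ))

/-- A real bivariate polynomial is (real) stable if its complexification is stable. -/
def RStableBiv (F : Polynomial (Polynomial ℝ)) : Prop := BStable (bivToC F)

/-- The extension of a linear operator `T` on `ℂ[z]` to `ℂ[z][w]` determined by
`T(z^k w^ℓ) = T(z^k) w^ℓ`. -/
def extT (T : Polynomial ℂ →ₗ[ℂ] Polynomial ℂ) (F : Polynomial (Polynomial ℂ)) :
    Polynomial (Polynomial ℂ) :=
  F.sum fun k c => Polynomial.C (T c) * Polynomial.X ^ k

/-- The extension of a linear operator `T` on `ℝ[z]` to `ℝ[z][w]` determined by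
`T(z^k w^ℓ) = T(z^k) w^ℓ`. -/
def extTR (T : Polynomial ℝ →ₗ[ℝ] Polynomial ℝ) (F : Polynomial (Polynomial ℝ)) :
    Polynomial (Polynomial ℝ) :=
  F.sum fun k c => Polynomial.C (T c) * Polynomial.X ^ k


/-- The real part of a complex polynomial (coefficientwise). -/
def rePoly (f : Polynomial ℂ) : Polynomial ℝ :=
  f.sum fun k c => Polynomial.C c.re * Polynomial.X ^ k

/-- The imaginary part of a complex polynomial (coefficientwise). -/
def imPoly (f : Polynomial ℂ) : Polynomial ℝ :=
  f.sum fun k c => Polynomial.C c.im * Polynomial.X ^ k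

/-- The extension by complex linearity of a real linear operator on `ℝ[z]` to
`ℂ[z] = ℝ[z] ⊕ iℝ[z]`. -/
def complexify (T : Polynomial ℝ →ₗ[ℝ] Polynomial ℝ) (f : Polynomial ℂ) :
    Polynomial ℂ :=
  (T (rePoly f)).map (algebraMap ℝ ℂ) +
    Complex.I • (T (imPoly f)).map (algebraMap ℝ ℂ)

/-- The complex absolute value, as an absolute value. -/
def Complex.abs : AbsoluteValue ℂ ℝ := IsAbsoluteValue.toAbsoluteValue (norm : ℂ → ℝ)

lemma Complex.abs_apply (z : ℂ) : Complex.abs z = Real.sqrt (Complex.normSq z) :=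
  Complex.norm_def z

@[simp] lemma Complex.abs_conj (z : ℂ) : Complex.abs ((starRingEnd ℂ) z) = Complex.abs z :=
  Complex.norm_conj z

lemma Complex.continuous_abs : Continuous Complex.abs := continuous_norm

lemma Complex.sq_abs (z : ℂ) : Complex.abs z ^ 2 = Complex.normSq z := Complex.sq_norm z

lemma coeff_rePoly (f : Polynomial ℂ) (k : ℕ) : (rePoly f).coeff k = (f.coeff k).re := by
  rw [rePoly, Polynomial.sum, Polynomial.finset_sum_coeff]
  simp only [Polynomial.coeff_C_mul, Polynomial.coeff_X_pow, mul_ite, mul_one, mul_zero]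
  rw [Finset.sum_ite_eq f.support k (fun j => (f.coeff j).re)]
  by_cases h : k ∈ f.support
  · simp [h]
  · simp only [h, if_false]
    rw [Polynomial.notMem_support_iff.mp h]
    simp

lemma coeff_imPoly (f : Polynomial ℂ) (k : ℕ) : (imPoly f).coeff k = (f.coeff k).im := by
  rw [imPoly, Polynomial.sum, Polynomial.finset_sum_coeff]
  simp only [Polynomial.coeff_C_mul, Polynomial.coeff_X_pow, mul_ite, mul_one, mul_zero]
  rw [Finset.sum_ite_eq f.support k (fun j => (f.coeff j).im)]
  by_cases h : k ∈ f.support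
  · simp [h]
  · simp only [h, if_false]
    rw [Polynomial.notMem_support_iff.mp h]
    simp

lemma rePoly_add (f g : Polynomial ℂ) : rePoly (f + g) = rePoly f + rePoly g := by
  ext k; simp [coeff_rePoly]
lemma imPoly_add (f g : Polynomial ℂ) : imPoly (f + g) = imPoly f + imPoly g := by
  ext k; simp [coeff_imPoly]
lemma rePoly_smul (a : ℂ) (f : Polynomial ℂ) :
    rePoly (a • f) = a.re • rePoly f - a.im • imPoly f := by
  ext k
  simp [coeff_rePoly, coeff_imPoly, Polynomial.coeff_smul, Complex.mul_re, smul_eq_mul]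
lemma imPoly_smul (a : ℂ) (f : Polynomial ℂ) :
    imPoly (a • f) = a.re • imPoly f + a.im • rePoly f := by
  ext k
  simp [coeff_rePoly, coeff_imPoly, Polynomial.coeff_smul, Complex.mul_im, smul_eq_mul]

lemma map_smul_real (t : ℝ) (p : Polynomial ℝ) :
    (t • p).map (algebraMap ℝ ℂ) = (t : ℂ) • (p.map (algebraMap ℝ ℂ)) := by
  rw [Polynomial.smul_eq_C_mul, Polynomial.map_mul, Polynomial.map_C,
    Polynomial.smul_eq_C_mul]; rfl

lemma complexify_add (T : Polynomial ℝ →ₗ[ℝ] Polynomial ℝ) (f g : Polynomial ℂ) :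
    complexify T (f + g) = complexify T f + complexify T g := by
  simp only [complexify, rePoly_add, imPoly_add, map_add, Polynomial.map_add, smul_add]
  ring

lemma real_smul_poly (r : ℝ) (A : Polynomial ℂ) : r • A = (r : ℂ) • A := by
  ext k; simp [Polynomial.coeff_smul, Complex.real_smul]

lemma complexify_smul (T : Polynomial ℝ →ₗ[ℝ] Polynomial ℝ) (a : ℂ) (f : Polynomial ℂ) :
    complexify T (a • f) = a • complexify T f := by
  simp only [complexify, rePoly_smul, imPoly_smul, map_sub, map_add, map_smul,
    Polynomial.map_sub, Polynomial.map_add, map_smul_real, smul_add, smul_sub, smul_smul]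
  set A := (T (rePoly f)).map (algebraMap ℝ ℂ) with hA
  set B := (T (imPoly f)).map (algebraMap ℝ ℂ) with hB
  have ha : a = (a.re : ℂ) + (a.im : ℂ) * Complex.I := by simp [Complex.ext_iff]
  conv_rhs => rw [ha]
  match_scalars <;> simp [Complex.ext_iff]
lemma conj_eval (q : Polynomial ℂ) (z : ℂ) :
    (starRingEnd ℂ) (q.eval z) = (q.map (starRingEnd ℂ)).eval ((starRingEnd ℂ) z) := by
  rw [Polynomial.eval_map]
  have := Polynomial.hom_eval₂ q (RingHom.id ℂ) (starRingEnd ℂ) z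
  simpa using this

lemma map_conj_real (p : Polynomial ℝ) :
    (p.map (algebraMap ℝ ℂ)).map (starRingEnd ℂ) = p.map (algebraMap ℝ ℂ) := by
  rw [Polynomial.map_map]
  congr 1
  ext r
  simp [Complex.conj_ofReal]

lemma conj_eval_real (p : Polynomial ℝ) (z : ℂ) :
    (starRingEnd ℂ) ((p.map (algebraMap ℝ ℂ)).eval z)
      = (p.map (algebraMap ℝ ℂ)).eval ((starRingEnd ℂ) z) := by
  rw [conj_eval, map_conj_real]

lemma abs_factor_le {z ρ : ℂ} (hz : 0 < z.im) (hρ : ρ.im ≤ 0) :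
    Complex.abs ((starRingEnd ℂ) z - ρ) ≤ Complex.abs (z - ρ) := by
  rw [Complex.abs_apply, Complex.abs_apply]
  apply Real.sqrt_le_sqrt
  simp only [Complex.normSq_apply, Complex.sub_re, Complex.sub_im, Complex.conj_re,
    Complex.conj_im]
  nlinarith [hz, hρ]

lemma abs_factor_lt {z ρ : ℂ} (hz : 0 < z.im) (hρ : ρ.im < 0) :
    Complex.abs ((starRingEnd ℂ) z - ρ) < Complex.abs (z - ρ) := by
  rw [Complex.abs_apply, Complex.abs_apply]
  apply Real.sqrt_lt_sqrt (Complex.normSq_nonneg _)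
  simp only [Complex.normSq_apply, Complex.sub_re, Complex.sub_im, Complex.conj_re,
    Complex.conj_im]
  nlinarith [hz, hρ]

lemma prod_abs_pos {z : ℂ} (S : Multiset ℂ) (hS : ∀ ρ ∈ S, ρ.im ≤ 0) (hz : 0 < z.im) :
    0 < (S.map fun ρ => Complex.abs (z - ρ)).prod := by
  induction S using Multiset.induction_on with
  | empty => simp
  | cons a s ih =>
    rw [Multiset.map_cons, Multiset.prod_cons]
    have ha : a.im ≤ 0 := hS a (Multiset.mem_cons_self a s)
    have h1 : z - a ≠ 0 := by
      intro h
      have : z = a := by linear_combination h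
      rw [this] at hz; linarith
    exact mul_pos (by simpa using h1) (ih fun ρ hρ => hS ρ (Multiset.mem_cons_of_mem hρ))

lemma prod_abs_le {z : ℂ} (S : Multiset ℂ) (hS : ∀ ρ ∈ S, ρ.im ≤ 0) (hz : 0 < z.im) :
    (S.map fun ρ => Complex.abs ((starRingEnd ℂ) z - ρ)).prod
      ≤ (S.map fun ρ => Complex.abs (z - ρ)).prod := by
  induction S using Multiset.induction_on with
  | empty => simp
  | cons a s ih =>
    rw [Multiset.map_cons, Multiset.prod_cons, Multiset.map_cons, Multiset.prod_cons]
    have ha : a.im ≤ 0 := hS a (Multiset.mem_cons_self a s)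
    have hrest : ∀ ρ ∈ s, ρ.im ≤ 0 := fun ρ hρ => hS ρ (Multiset.mem_cons_of_mem hρ)
    apply mul_le_mul (abs_factor_le hz ha) (ih hrest)
    · exact Multiset.prod_nonneg (by
        intro x hx
        obtain ⟨ρ, _, rfl⟩ := Multiset.mem_map.mp hx
        exact AbsoluteValue.nonneg _ _)
    · exact AbsoluteValue.nonneg _ _

lemma prod_abs_lt {z ρ₀ : ℂ} (S : Multiset ℂ) (hS : ∀ ρ ∈ S, ρ.im ≤ 0) (hz : 0 < z.im)
    (hρ₀ : ρ₀.im < 0) :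
    ((ρ₀ ::ₘ S).map fun ρ => Complex.abs ((starRingEnd ℂ) z - ρ)).prod
      < ((ρ₀ ::ₘ S).map fun ρ => Complex.abs (z - ρ)).prod := by
  rw [Multiset.map_cons, Multiset.prod_cons, Multiset.map_cons, Multiset.prod_cons]
  have h1 : (S.map fun ρ => Complex.abs ((starRingEnd ℂ) z - ρ)).prod
      ≤ (S.map fun ρ => Complex.abs (z - ρ)).prod := prod_abs_le S hS hz
  have h2 : 0 < (S.map fun ρ => Complex.abs (z - ρ)).prod := prod_abs_pos S hS hz
  calc Complex.abs ((starRingEnd ℂ) z - ρ₀) * (S.map fun ρ => Complex.abs ((starRingEnd ℂ) z - ρ)).prod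
      ≤ Complex.abs ((starRingEnd ℂ) z - ρ₀) * (S.map fun ρ => Complex.abs (z - ρ)).prod := by
        exact mul_le_mul_of_nonneg_left h1 (AbsoluteValue.nonneg _ _)
    _ < Complex.abs (z - ρ₀) * (S.map fun ρ => Complex.abs (z - ρ)).prod := by
        exact mul_lt_mul_of_pos_right (abs_factor_lt hz hρ₀) h2

lemma abs_eval_eq_prod (f : Polynomial ℂ) (hf : f ≠ 0) (z : ℂ) :
    Complex.abs (f.eval z)
      = Complex.abs f.leadingCoeff * (f.roots.map fun ρ => Complex.abs (z - ρ)).prod := by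
  have hcard : Multiset.card f.roots = f.natDegree :=
    Polynomial.splits_iff_card_roots.mp (IsAlgClosed.splits f)
  conv_lhs => rw [← Polynomial.C_leadingCoeff_mul_prod_multiset_X_sub_C hcard]
  rw [Polynomial.eval_mul, Polynomial.eval_C, map_mul]
  congr 1
  rw [Polynomial.eval_multiset_prod, Multiset.map_map]
  induction f.roots using Multiset.induction_on with
  | empty => simp
  | cons a s ih =>
    rw [Multiset.map_cons, Multiset.prod_cons, Multiset.map_cons, Multiset.prod_cons, map_mul, ih]
    simp

lemma UStable.ne_zero {f : Polynomial ℂ} (h : UStable f) : f ≠ 0 := by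
  intro h0
  exact h Complex.I (by simp) (by simp [h0])

lemma UStable.root_im_le {f : Polynomial ℂ} (h : UStable f) {ρ : ℂ} (hρ : f.eval ρ = 0) :
    ρ.im ≤ 0 := by
  by_contra hlt
  exact h ρ (by linarith) hρ

lemma f_eq_re_add_im (f : Polynomial ℂ) :
    f = (rePoly f).map (algebraMap ℝ ℂ) + Polynomial.C Complex.I * (imPoly f).map (algebraMap ℝ ℂ) := by
  ext k
  simp only [Polynomial.coeff_add, Polynomial.coeff_C_mul, Polynomial.coeff_map,
    coeff_rePoly, coeff_imPoly]
  simp [Complex.ext_iff]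

/-- Key algebraic identity : `C φ * f + C (conj φ) * (conj f) = C 2 * (l•h + m•g)` mapped. -/
lemma pencil_identity (f : Polynomial ℂ) (l m : ℝ) :
    Polynomial.C ((l : ℂ) - Complex.I * m) * f
      + Polynomial.C ((starRingEnd ℂ) ((l : ℂ) - Complex.I * m)) * (f.map (starRingEnd ℂ))
      = Polynomial.C 2 * ((l • rePoly f + m • imPoly f).map (algebraMap ℝ ℂ)) := by
  ext k
  simp only [Polynomial.coeff_add, Polynomial.coeff_C_mul, Polynomial.coeff_map,
    Polynomial.coeff_smul, coeff_rePoly, coeff_imPoly, smul_eq_mul]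
  have : (starRingEnd ℂ) (f.coeff k) = (f.coeff k).re - (f.coeff k).im * Complex.I := by
    simp [Complex.ext_iff]
  rw [this]
  simp [Complex.ext_iff, Complex.mul_re, Complex.mul_im]
  constructor <;> ring

/-- If a nonzero real pencil combination of the real/imaginary parts of a stable
polynomial with a strictly-lower root vanishes identically, contradiction. -/
lemma pencil_ne_zero (f : Polynomial ℂ) (hst : UStable f) {ρ₀ : ℂ} (hρ₀ : ρ₀.im < 0)
    (hroot : f.eval ρ₀ = 0) (l m : ℝ) (hlm : ¬(l = 0 ∧ m = 0)) :
    l • rePoly f + m • imPoly f ≠ 0 := by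
  intro hzero
  -- f = (-m + l I) • w.map where w is an explicit real polynomial
  set w : Polynomial ℝ := ((l^2 + m^2)⁻¹ : ℝ) • (l • imPoly f - m • rePoly f) with hw
  have hlm2 : l^2 + m^2 ≠ 0 := by
    intro h
    exact hlm ⟨by nlinarith [sq_nonneg l, sq_nonneg m], by nlinarith [sq_nonneg l, sq_nonneg m]⟩
  have hcoeff : ∀ k, l * (rePoly f).coeff k + m * (imPoly f).coeff k = 0 := by
    intro k
    have := congrArg (fun p => Polynomial.coeff p k) hzero
    simpa [Polynomial.coeff_smul, smul_eq_mul] using this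
  have hre : rePoly f = (-m) • w := by
    ext k
    have h1 := hcoeff k
    simp only [hw, Polynomial.coeff_smul, Polynomial.coeff_sub, smul_eq_mul]
    field_simp
    linear_combination l * h1
  have him : imPoly f = l • w := by
    ext k
    have h1 := hcoeff k
    simp only [hw, Polynomial.coeff_smul, Polynomial.coeff_sub, smul_eq_mul]
    field_simp
    linear_combination m * h1
  have hfw : f = ((-m : ℂ) + l * Complex.I) • (w.map (algebraMap ℝ ℂ)) := by
    ext k
    simp only [Polynomial.coeff_smul, Polynomial.coeff_map, smul_eq_mul]
    have h1 : (rePoly f).coeff k = -m * w.coeff k := by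
      rw [hre]; simp [Polynomial.coeff_smul]
    have h2 : (imPoly f).coeff k = l * w.coeff k := by
      rw [him]; simp [Polynomial.coeff_smul]
    have h3 : f.coeff k = ((rePoly f).coeff k : ℂ) + ((imPoly f).coeff k : ℂ) * Complex.I := by
      simp [coeff_rePoly, coeff_imPoly, Complex.ext_iff]
    rw [h3, h1, h2]
    have h4 : (algebraMap ℝ ℂ) (w.coeff k) = ((w.coeff k : ℝ) : ℂ) := rfl
    rw [h4]
    push_cast
    ring
  -- evaluate at ρ₀, transfer to conj ρ₀
  have hscal : ((-m : ℂ) + l * Complex.I) ≠ 0 := by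
    intro h
    rw [Complex.ext_iff] at h
    simp at h
    exact hlm ⟨h.2, by simpa using h.1⟩
  have hweval : (w.map (algebraMap ℝ ℂ)).eval ρ₀ = 0 := by
    have := hroot
    rw [hfw] at this
    simpa [Polynomial.eval_smul, hscal] using this
  have hconj : (w.map (algebraMap ℝ ℂ)).eval ((starRingEnd ℂ) ρ₀) = 0 := by
    rw [← conj_eval_real, hweval, map_zero]
  have : f.eval ((starRingEnd ℂ) ρ₀) = 0 := by
    rw [hfw]
    simp [Polynomial.eval_smul, hconj]
  exact hst ((starRingEnd ℂ) ρ₀) (by simpa using hρ₀ ) this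

/-- Forward Hermite–Biehler: nonzero real combinations of the parts of a stable
polynomial with a strictly-lower root are hyperbolic. -/
lemma pencil_hyperbolic (f : Polynomial ℂ) (hst : UStable f) {ρ₀ : ℂ} (hρ₀ : ρ₀.im < 0)
    (hroot : f.eval ρ₀ = 0) (l m : ℝ) (hlm : ¬(l = 0 ∧ m = 0)) :
    Hyperbolic (l • rePoly f + m • imPoly f) := by
  have hf : f ≠ 0 := hst.ne_zero
  refine ⟨pencil_ne_zero f hst hρ₀ hroot l m hlm, ?_⟩
  intro z₀ hz₀
  by_contra him
  -- get an upper half-plane root z of the mapped pencil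
  set p := l • rePoly f + m • imPoly f with hp
  set pm := p.map (algebraMap ℝ ℂ) with hpm
  have hz₀' : pm.eval z₀ = 0 := by
    rw [hpm, ← Polynomial.eval₂_eq_eval_map]
    exact hz₀
  have hzc : pm.eval ((starRingEnd ℂ) z₀) = 0 := by
    rw [← conj_eval_real, hz₀', map_zero]
  obtain ⟨z, hz, hzeval⟩ : ∃ z : ℂ, 0 < z.im ∧ pm.eval z = 0 := by
    rcases lt_trichotomy z₀.im 0 with h | h | h
    · exact ⟨(starRingEnd ℂ) z₀, by simpa using h, hzc⟩
    · exact absurd h him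
    · exact ⟨z₀, h, hz₀'⟩
  -- the identity gives |f(z)| = |f(conj z)|
  set φ : ℂ := (l : ℂ) - Complex.I * m with hφ
  have hφne : φ ≠ 0 := by
    intro h
    rw [Complex.ext_iff] at h
    simp [hφ] at h
    exact hlm ⟨h.1, h.2⟩
  have hid := pencil_identity f l m
  have hid' := congrArg (fun q => Polynomial.eval z q) hid
  simp only [Polynomial.eval_add, Polynomial.eval_mul, Polynomial.eval_C] at hid'
  rw [← hp, ← hpm] at hid'
  rw [hzeval, mul_zero] at hid'
  have hfmc : (f.map (starRingEnd ℂ)).eval z = (starRingEnd ℂ) (f.eval ((starRingEnd ℂ) z)) := by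
    rw [conj_eval]
    simp
  rw [hfmc] at hid'
  have habs : Complex.abs (f.eval z) = Complex.abs (f.eval ((starRingEnd ℂ) z)) := by
    have h2 : φ * f.eval z = - ((starRingEnd ℂ) φ * (starRingEnd ℂ) (f.eval ((starRingEnd ℂ) z))) := by
      linear_combination hid'
    have := congrArg Complex.abs h2
    rw [map_mul, Complex.abs.map_neg, map_mul, Complex.abs_conj, Complex.abs_conj] at this
    exact mul_left_cancel₀ (by simpa using hφne) this
  -- strict inequality from the strictly-lower root
  have hρ₀mem : ρ₀ ∈ f.roots := by
    rw [Polynomial.mem_roots hf]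
    exact hroot
  obtain ⟨rest, hrest⟩ := Multiset.exists_cons_of_mem hρ₀mem
  have hallroots : ∀ ρ ∈ f.roots, ρ.im ≤ 0 := by
    intro ρ hρ
    exact hst.root_im_le ((Polynomial.mem_roots hf).mp hρ)
  have hrestim : ∀ ρ ∈ rest, ρ.im ≤ 0 := by
    intro ρ hρ
    exact hallroots ρ (by rw [hrest]; exact Multiset.mem_cons_of_mem hρ)
  have hstrict : Complex.abs (f.eval ((starRingEnd ℂ) z)) < Complex.abs (f.eval z) := by
    rw [abs_eval_eq_prod f hf, abs_eval_eq_prod f hf, hrest]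
    have hlc : 0 < Complex.abs f.leadingCoeff := by
      simpa using (Polynomial.leadingCoeff_ne_zero.mpr hf)
    exact mul_lt_mul_of_pos_left (prod_abs_lt rest hrestim hz hρ₀) hlc
  rw [habs] at hstrict
  exact lt_irrefl _ hstrict

lemma degree_rePoly_le (f : Polynomial ℂ) : (rePoly f).degree ≤ f.degree := by
  refine (Polynomial.degree_le_iff_coeff_zero _ _).mpr ?_
  intro m hm
  rw [coeff_rePoly, Polynomial.coeff_eq_zero_of_degree_lt hm, Complex.zero_re]

lemma degree_imPoly_le (f : Polynomial ℂ) : (imPoly f).degree ≤ f.degree := by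
  refine (Polynomial.degree_le_iff_coeff_zero _ _).mpr ?_
  intro m hm
  rw [coeff_imPoly, Polynomial.coeff_eq_zero_of_degree_lt hm, Complex.zero_im]

section TSection

variable (n : ℕ) (T : Polynomial ℝ →ₗ[ℝ] Polynomial ℝ)

/-- The sign function governing stability orientation. -/
def Sfun (f : Polynomial ℂ) (z : ℂ) : ℝ :=
  (Complex.abs ((complexify T f).eval z))^2
    - (Complex.abs ((complexify T f).eval ((starRingEnd ℂ) z)))^2

/-- "Good" polynomials: stable, degree ≤ n, with a root in the open lower half-plane. -/
def Good (f : Polynomial ℂ) : Prop :=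
  UStable f ∧ f.degree ≤ (n : WithBot ℕ) ∧ ∃ ρ : ℂ, ρ.im < 0 ∧ f.eval ρ = 0

variable (hT : ∀ f : Polynomial ℝ, f.degree ≤ (n : WithBot ℕ) → Hyperbolic f →
      Hyperbolic (T f))

lemma CT_eval (f : Polynomial ℂ) (z : ℂ) :
    (complexify T f).eval z
      = ((T (rePoly f)).map (algebraMap ℝ ℂ)).eval z
        + Complex.I * ((T (imPoly f)).map (algebraMap ℝ ℂ)).eval z := by
  simp [complexify, Polynomial.eval_smul, smul_eq_mul]

lemma CT_eval_conj (f : Polynomial ℂ) (z : ℂ) :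
    (complexify T f).eval ((starRingEnd ℂ) z)
      = (starRingEnd ℂ) (((T (rePoly f)).map (algebraMap ℝ ℂ)).eval z
        - Complex.I * ((T (imPoly f)).map (algebraMap ℝ ℂ)).eval z) := by
  rw [CT_eval]
  rw [map_sub, map_mul, ← conj_eval_real, ← conj_eval_real]
  simp only [Complex.conj_conj, Complex.conj_I]
  ring

include hT in
/-- The sign function never vanishes on the open upper half-plane for good `f`. -/
lemma Sfun_ne_zero {f : Polynomial ℂ} (hf : Good n f) {z : ℂ} (hz : 0 < z.im) :
    Sfun T f z ≠ 0 := by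
  obtain ⟨hst, hdeg, ρ₀, hρ₀, hroot⟩ := hf
  intro hS
  set a : ℂ := ((T (rePoly f)).map (algebraMap ℝ ℂ)).eval z with ha
  set b : ℂ := ((T (imPoly f)).map (algebraMap ℝ ℂ)).eval z with hb
  -- b ≠ 0 because T(imPoly f) is hyperbolic and z is not real
  have hg : Hyperbolic (imPoly f) := by
    have := pencil_hyperbolic f hst hρ₀ hroot 0 1 (by simp)
    simpa using this
  have hgdeg : (imPoly f).degree ≤ (n : WithBot ℕ) := le_trans (degree_imPoly_le f) hdeg
  have hTg : Hyperbolic (T (imPoly f)) := hT _ hgdeg hg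
  have hbne : b ≠ 0 := by
    intro h0
    have : Polynomial.aeval z (T (imPoly f)) = 0 := by
      rw [Polynomial.aeval_def, Polynomial.eval₂_eq_eval_map]; exact h0
    have := hTg.2 z this
    rw [this] at hz; exact lt_irrefl _ hz
  -- from Sfun = 0 the ratio a/b is real
  have hS' : (Complex.abs (a + Complex.I * b))^2 = (Complex.abs (a - Complex.I * b))^2 := by
    have e1 : (complexify T f).eval z = a + Complex.I * b := CT_eval T f z
    have e2 : (complexify T f).eval ((starRingEnd ℂ) z)
        = (starRingEnd ℂ) (a - Complex.I * b) := CT_eval_conj T f z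
    rw [Sfun, e1, e2, Complex.abs_conj] at hS
    linarith
  have him : (a * (starRingEnd ℂ) b).im = 0 := by
    rw [Complex.sq_abs, Complex.sq_abs] at hS'
    simp only [Complex.normSq_apply, Complex.add_re, Complex.add_im, Complex.sub_re,
      Complex.sub_im, Complex.mul_re, Complex.mul_im, Complex.I_re, Complex.I_im,
      Complex.conj_re, Complex.conj_im] at hS' ⊢
    nlinarith [hS']
  -- hence a = t • b for a real t
  set t : ℝ := (a * (starRingEnd ℂ) b).re / Complex.normSq b with ht
  have hab : a = (t : ℂ) * b := by
    have h1 : a * (starRingEnd ℂ) b = ((a * (starRingEnd ℂ) b).re : ℂ) := by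
      rw [Complex.ext_iff]; constructor
      · simp
      · simp [him]
    have h2 : b * (starRingEnd ℂ) b = (Complex.normSq b : ℂ) := Complex.mul_conj b
    have hnsq : Complex.normSq b ≠ 0 := by
      simpa using hbne
    have hcast : (Complex.normSq b : ℂ) ≠ 0 := by exact_mod_cast hnsq
    have hmain : a * (Complex.normSq b : ℂ) = ((a * (starRingEnd ℂ) b).re : ℂ) * b := by
      rw [← h1, ← h2]; ring
    have key : a = (((a * (starRingEnd ℂ) b).re : ℂ) / (Complex.normSq b : ℂ)) * b := by
      rw [div_mul_eq_mul_div, eq_div_iff hcast]; exact hmain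
    rw [ht]; push_cast; exact key
  -- the combination h - t g is hyperbolic with a nonreal root: contradiction
  have hcombo : Hyperbolic ((1:ℝ) • rePoly f + (-t) • imPoly f) :=
    pencil_hyperbolic f hst hρ₀ hroot 1 (-t) (by simp)
  have hcdeg : ((1:ℝ) • rePoly f + (-t) • imPoly f).degree ≤ (n : WithBot ℕ) := by
    refine le_trans (Polynomial.degree_add_le _ _) (max_le ?_ ?_)
    · exact le_trans (Polynomial.degree_smul_le _ _) (le_trans (degree_rePoly_le f) hdeg)
    · exact le_trans (Polynomial.degree_smul_le _ _) (le_trans (degree_imPoly_le f) hdeg)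
  have hTc : Hyperbolic (T ((1:ℝ) • rePoly f + (-t) • imPoly f)) := hT _ hcdeg hcombo
  have heval : Polynomial.aeval z (T ((1:ℝ) • rePoly f + (-t) • imPoly f)) = 0 := by
    rw [map_add, map_smul, map_smul]
    rw [Polynomial.aeval_def, Polynomial.eval₂_eq_eval_map]
    rw [Polynomial.map_add, map_smul_real, map_smul_real]
    rw [Polynomial.eval_add, Polynomial.eval_smul, Polynomial.eval_smul]
    rw [← ha, ← hb]
    push_cast
    rw [hab]
    simp
  have := hTc.2 z heval
  rw [this] at hz; exact lt_irrefl _ hz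

lemma continuous_Sfun (f : Polynomial ℂ) : Continuous fun z => Sfun T f z := by
  unfold Sfun
  have h1 : Continuous fun z : ℂ => (complexify T f).eval z := by continuity
  have h2 : Continuous fun z : ℂ => (starRingEnd ℂ) z := Complex.continuous_conj
  exact ((Complex.continuous_abs.comp h1).pow 2).sub
    ((Complex.continuous_abs.comp (h1.comp h2)).pow 2)

lemma upperHalf_preconnected : IsPreconnected {z : ℂ | 0 < z.im} := by
  apply Convex.isPreconnected
  exact convex_halfSpace_im_gt 0

include hT in
lemma Sfun_sign_transfer {f : Polynomial ℂ} (hf : Good n f) {z1 z2 : ℂ}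
    (h1 : 0 < z1.im) (h2 : 0 < z2.im) (hneg : Sfun T f z1 < 0) : Sfun T f z2 < 0 := by
  rcases lt_trichotomy (Sfun T f z2) 0 with h | h | h
  · exact h
  · exact absurd h (Sfun_ne_zero n T hT hf h2)
  · exfalso
    have hsub : Set.Icc (Sfun T f z1) (Sfun T f z2) ⊆ (fun z => Sfun T f z) '' {z : ℂ | 0 < z.im} :=
      upperHalf_preconnected.intermediate_value h1 h2 ((continuous_Sfun T f).continuousOn)
    obtain ⟨z, hzmem, hz0⟩ := hsub ⟨le_of_lt hneg, le_of_lt h⟩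
    exact Sfun_ne_zero n T hT hf hzmem hz0

end TSection

/-- A linear factor from a parameter pair. -/
def linfac (q : ℂ × ℂ) : Polynomial ℂ := Polynomial.C q.1 * Polynomial.X + Polynomial.C q.2

lemma linfac_eval (q : ℂ × ℂ) (z : ℂ) : (linfac q).eval z = q.1 * z + q.2 := by
  simp [linfac]

/-- Weak admissibility: the factor has no zero in the open upper half-plane. -/
def Dset (q : ℂ × ℂ) : Prop := ∀ z : ℂ, 0 < z.im → q.1 * z + q.2 ≠ 0

/-- Strict admissibility: the factor has its zero in the open lower half-plane. -/
def D1set (q : ℂ × ℂ) : Prop := 0 < (q.2 * (starRingEnd ℂ) q.1).im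

lemma D1set.u_ne_zero {q : ℂ × ℂ} (h : D1set q) : q.1 ≠ 0 := by
  intro h0
  rw [D1set, h0] at h
  simp at h

lemma D1set.dset {q : ℂ × ℂ} (h : D1set q) : Dset q := by
  intro z hz heq
  have hv : q.2 = -(q.1 * z) := by linear_combination heq
  rw [D1set, hv] at h
  have he : -(q.1 * z) * (starRingEnd ℂ) q.1 = -(z * (q.1 * (starRingEnd ℂ) q.1)) := by ring
  rw [he, Complex.mul_conj] at h
  simp only [Complex.neg_im, Complex.mul_im, Complex.ofReal_re, Complex.ofReal_im] at h
  nlinarith [Complex.normSq_nonneg q.1, hz, h]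

lemma Dset_const {v : ℂ} (hv : v ≠ 0) : Dset (0, v) := by
  intro z _
  simpa using hv

lemma D1set.root {q : ℂ × ℂ} (h : D1set q) :
    ∃ ρ : ℂ, ρ.im < 0 ∧ (linfac q).eval ρ = 0 := by
  have hu := h.u_ne_zero
  have hnum : 0 < q.2.im * q.1.re - q.2.re * q.1.im := by
    have h' := h
    rw [D1set, Complex.mul_im] at h'
    simp only [Complex.conj_re, Complex.conj_im] at h'
    linarith
  refine ⟨-q.2 / q.1, ?_, ?_⟩
  · rw [Complex.div_im]
    simp only [Complex.neg_re, Complex.neg_im]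
    have hden : 0 < Complex.normSq q.1 := by simpa [Complex.normSq_pos] using hu
    rw [div_sub_div_same]
    apply div_neg_of_neg_of_pos _ hden
    nlinarith
  · rw [linfac_eval]
    field_simp
    ring

lemma UStable.mul {p q : Polynomial ℂ} (hp : UStable p) (hq : UStable q) : UStable (p * q) := by
  intro z hz
  rw [Polynomial.eval_mul]
  exact mul_ne_zero (hp z hz) (hq z hz)

lemma UStable_linfac {q : ℂ × ℂ} (h : Dset q) : UStable (linfac q) := by
  intro z hz
  rw [linfac_eval]
  exact h z hz

lemma degree_linfac_le (q : ℂ × ℂ) : (linfac q).degree ≤ 1 := by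
  unfold linfac
  refine le_trans (Polynomial.degree_add_le _ _) (max_le ?_ ?_)
  · refine le_trans (Polynomial.degree_mul_le _ _) ?_
    rw [Polynomial.degree_X]
    calc Polynomial.degree (Polynomial.C q.1) + 1 ≤ (0 : WithBot ℕ) + 1 :=
          add_le_add_left Polynomial.degree_C_le 1
      _ = 1 := by rw [zero_add]
  · exact le_trans Polynomial.degree_C_le (by norm_num)

section TSection2

variable (n : ℕ) (T : Polynomial ℝ →ₗ[ℝ] Polynomial ℝ)
variable (hT : ∀ f : Polynomial ℝ, f.degree ≤ (n : WithBot ℕ) → Hyperbolic f →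
      Hyperbolic (T f))

lemma linfac_mul_decomp (q : ℂ × ℂ) (R : Polynomial ℂ) :
    linfac q * R = q.1 • (Polynomial.X * R) + q.2 • R := by
  rw [linfac, Polynomial.smul_eq_C_mul, Polynomial.smul_eq_C_mul]
  ring

lemma CT_linfac_mul (q : ℂ × ℂ) (R : Polynomial ℂ) :
    complexify T (linfac q * R)
      = q.1 • complexify T (Polynomial.X * R) + q.2 • complexify T R := by
  rw [linfac_mul_decomp, complexify_add, complexify_smul, complexify_smul]

lemma Sfun_linfac (q : ℂ × ℂ) (R : Polynomial ℂ) (z : ℂ) :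
    Sfun T (linfac q * R) z
      = (Complex.abs (q.1 * (complexify T (Polynomial.X * R)).eval z
            + q.2 * (complexify T R).eval z))^2
        - (Complex.abs (q.1 * (complexify T (Polynomial.X * R)).eval ((starRingEnd ℂ) z)
            + q.2 * (complexify T R).eval ((starRingEnd ℂ) z)))^2 := by
  rw [Sfun, CT_linfac_mul]
  simp [Polynomial.eval_smul, smul_eq_mul]

/-- Goodness of a product of a linear factor and a rest polynomial. -/
lemma good_linfac_mul {q : ℂ × ℂ} {R : Polynomial ℂ} (hq : Dset q) (hR : UStable R)
    (hdeg : (linfac q * R).degree ≤ (n : WithBot ℕ))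
    (hstrict : D1set q ∨ ∃ ρ : ℂ, ρ.im < 0 ∧ R.eval ρ = 0) :
    Good n (linfac q * R) := by
  refine ⟨(UStable_linfac hq).mul hR, hdeg, ?_⟩
  rcases hstrict with h | ⟨ρ, hρ, hρev⟩
  · obtain ⟨ρ, hρ, hρev⟩ := h.root
    exact ⟨ρ, hρ, by rw [Polynomial.eval_mul, hρev, zero_mul]⟩
  · exact ⟨ρ, hρ, by rw [Polynomial.eval_mul, hρev, mul_zero]⟩

include hT in
/-- The key segment transfer: moving one linear factor along an affine segment of
admissible parameters preserves the sign of `Sfun` at `i`. -/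
lemma seg_transfer {ε : ℝ} (hε : ε ≠ 0) {q q' : ℂ × ℂ} {R : Polynomial ℂ}
    (hcond : ∀ t : ℝ, t ∈ Set.Icc (0:ℝ) 1 → Good n (linfac ((1-t) • q + t • q') * R))
    (hneg : ε * Sfun T (linfac q * R) Complex.I < 0) :
    ε * Sfun T (linfac q' * R) Complex.I < 0 := by
  set γ : ℝ → ℂ × ℂ := fun t => (1-t) • q + t • q' with hγ
  have hγ0 : γ 0 = q := by simp [hγ]
  have hγ1 : γ 1 = q' := by simp [hγ]
  set G : ℝ → ℝ := fun t => ε * Sfun T (linfac (γ t) * R) Complex.I with hG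
  have hcont : Continuous G := by
    have h1 : Continuous fun t : ℝ => (γ t).1 := by
      simp only [hγ, Prod.fst_add, Prod.smul_fst]
      fun_prop
    have h2 : Continuous fun t : ℝ => (γ t).2 := by
      simp only [hγ, Prod.snd_add, Prod.smul_snd]
      fun_prop
    have : G = fun t => ε *
        ((Complex.abs ((γ t).1 * (complexify T (Polynomial.X * R)).eval Complex.I
            + (γ t).2 * (complexify T R).eval Complex.I))^2
        - (Complex.abs ((γ t).1 * (complexify T (Polynomial.X * R)).eval ((starRingEnd ℂ) Complex.I)
            + (γ t).2 * (complexify T R).eval ((starRingEnd ℂ) Complex.I)))^2) := by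
      funext t
      rw [hG]
      show ε * Sfun T (linfac (γ t) * R) Complex.I = _
      rw [Sfun_linfac T (γ t) R Complex.I]
    rw [this]
    apply Continuous.mul continuous_const
    apply Continuous.sub
    · exact (Complex.continuous_abs.comp (by fun_prop)).pow 2
    · exact (Complex.continuous_abs.comp (by fun_prop)).pow 2
  have hnv : ∀ t ∈ Set.Icc (0:ℝ) 1, G t ≠ 0 := by
    intro t ht
    exact mul_ne_zero hε (Sfun_ne_zero n T hT (hcond t ht) (by simp))
  have hG0 : G 0 < 0 := by
    show ε * Sfun T (linfac (γ 0) * R) Complex.I < 0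
    rw [hγ0]; exact hneg
  rcases lt_trichotomy (G 1) 0 with h | h | h
  · have : G 1 = ε * Sfun T (linfac q' * R) Complex.I := by
      show ε * Sfun T (linfac (γ 1) * R) Complex.I = _
      rw [hγ1]
    rwa [this] at h
  · exact absurd h (hnv 1 (by norm_num))
  · exfalso
    have hsub : Set.Icc (G 0) (G 1) ⊆ G '' Set.Icc 0 1 :=
      intermediate_value_Icc (by norm_num) hcont.continuousOn
    obtain ⟨t, htmem, ht0⟩ := hsub ⟨le_of_lt hG0, le_of_lt h⟩
    exact hnv t htmem ht0

end TSection2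

lemma Dset.v_ne_zero {q : ℂ × ℂ} (h : Dset q) (h0 : q.1 = 0) : q.2 ≠ 0 := by
  intro h2
  have := h Complex.I (by simp)
  rw [h0, h2] at this
  simp at this

lemma Dset_of_nonneg {q : ℂ × ℂ} (hu : q.1 ≠ 0) (h : 0 ≤ (q.2 * (starRingEnd ℂ) q.1).im) :
    Dset q := by
  intro z hz heq
  have hv : q.2 = -(q.1 * z) := by linear_combination heq
  rw [hv] at h
  have he : -(q.1 * z) * (starRingEnd ℂ) q.1 = -(z * (q.1 * (starRingEnd ℂ) q.1)) := by ring
  rw [he, Complex.mul_conj] at h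
  simp only [Complex.neg_im, Complex.mul_im, Complex.ofReal_re, Complex.ofReal_im] at h
  have hnsq : 0 < Complex.normSq q.1 := by simpa [Complex.normSq_pos] using hu
  nlinarith

lemma Dset.im_nonneg {q : ℂ × ℂ} (h : Dset q) (hu : q.1 ≠ 0) :
    0 ≤ (q.2 * (starRingEnd ℂ) q.1).im := by
  by_contra hneg
  push_neg at hneg
  -- the root -q.2/q.1 lies in the upper half-plane
  have hnsq : 0 < Complex.normSq q.1 := by simpa [Complex.normSq_pos] using hu
  have hnum : q.2.im * q.1.re - q.2.re * q.1.im < 0 := by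
    rw [Complex.mul_im] at hneg
    simp only [Complex.conj_re, Complex.conj_im] at hneg
    linarith
  have him : 0 < (-q.2 / q.1).im := by
    rw [Complex.div_im]
    simp only [Complex.neg_re, Complex.neg_im]
    rw [div_sub_div_same]
    apply div_pos _ hnsq
    nlinarith
  exact h _ him (by field_simp; ring)

lemma D1set_Iu {u : ℂ} (hu : u ≠ 0) : D1set (u, Complex.I * u) := by
  rw [D1set]
  have : Complex.I * u * (starRingEnd ℂ) u = Complex.I * (u * (starRingEnd ℂ) u) := by ring
  simp only [this, Complex.mul_conj]
  simp only [Complex.mul_im, Complex.I_re, Complex.I_im, Complex.ofReal_re, Complex.ofReal_im]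
  have : 0 < Complex.normSq u := by simpa [Complex.normSq_pos] using hu
  simpa using this

lemma D1set_one_I : D1set ((1 : ℂ), Complex.I) := by
  rw [D1set]
  simp

section TSection3

variable (n : ℕ) (T : Polynomial ℝ →ₗ[ℝ] Polynomial ℝ)
variable (hT : ∀ f : Polynomial ℝ, f.degree ≤ (n : WithBot ℕ) → Hyperbolic f →
      Hyperbolic (T f))

lemma degree_linfac_mul_le {q : ℂ × ℂ} {R : Polynomial ℂ}
    (hdegR : R.degree + 1 ≤ (n : WithBot ℕ)) :
    (linfac q * R).degree ≤ (n : WithBot ℕ) := by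
  refine le_trans (Polynomial.degree_mul_le _ _) ?_
  refine le_trans ?_ hdegR
  rw [add_comm]
  exact add_le_add_right (degree_linfac_le q) _

include hT in
lemma seg_transfer' {ε : ℝ} (hε : ε ≠ 0) {qa qb : ℂ × ℂ} {R : Polynomial ℂ} (hR : UStable R)
    (hdegR : R.degree + 1 ≤ (n : WithBot ℕ))
    (hd : ∀ t : ℝ, t ∈ Set.Icc (0:ℝ) 1 → Dset ((1-t) • qa + t • qb))
    (hs : ∀ t : ℝ, t ∈ Set.Icc (0:ℝ) 1 →
      (D1set ((1-t) • qa + t • qb) ∨ ∃ ρ : ℂ, ρ.im < 0 ∧ R.eval ρ = 0))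
    (hneg : ε * Sfun T (linfac qa * R) Complex.I < 0) :
    ε * Sfun T (linfac qb * R) Complex.I < 0 := by
  refine seg_transfer n T hT hε (fun t ht => ?_) hneg
  exact good_linfac_mul n (hd t ht) hR (degree_linfac_mul_le n hdegR) (hs t ht)

end TSection3

lemma comb_same (t : ℝ) (x : ℂ) : (1-t) • x + t • x = x := by
  rw [← add_smul]
  norm_num

lemma comb_eval (t : ℝ) (x y : ℂ) : (1-t) • x + t • y = x + t • (y - x) := by
  simp only [Complex.real_smul]
  push_cast
  ring

section TSection4

variable (n : ℕ) (T : Polynomial ℝ →ₗ[ℝ] Polynomial ℝ)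
variable (hT : ∀ f : Polynomial ℝ, f.degree ≤ (n : WithBot ℕ) → Hyperbolic f →
      Hyperbolic (T f))

include hT in
/-- Moving a coupled factor `(u, I u)` along a nonvanishing path of `u`'s. -/
lemma seg_Iu {ε : ℝ} (hε : ε ≠ 0) {u0 u1 : ℂ} {R : Polynomial ℂ} (hR : UStable R)
    (hdegR : R.degree + 1 ≤ (n : WithBot ℕ))
    (hne : ∀ t : ℝ, t ∈ Set.Icc (0:ℝ) 1 → (1-t) • u0 + t • u1 ≠ 0)
    (hneg : ε * Sfun T (linfac (u0, Complex.I * u0) * R) Complex.I < 0) :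
    ε * Sfun T (linfac (u1, Complex.I * u1) * R) Complex.I < 0 := by
  have hcomp : ∀ t : ℝ, ((1-t) • ((u0, Complex.I * u0) : ℂ × ℂ) + t • (u1, Complex.I * u1))
      = ((1-t) • u0 + t • u1, Complex.I * ((1-t) • u0 + t • u1)) := by
    intro t
    rw [Prod.ext_iff]
    constructor
    · rfl
    · show (1-t) • (Complex.I * u0) + t • (Complex.I * u1) = _
      simp only [Complex.real_smul]
      ring
  have hD1 : ∀ t : ℝ, t ∈ Set.Icc (0:ℝ) 1 →
      D1set ((1-t) • ((u0, Complex.I * u0) : ℂ × ℂ) + t • (u1, Complex.I * u1)) := by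
    intro t ht
    rw [hcomp t]
    exact D1set_Iu (hne t ht)
  exact seg_transfer' n T hT hε hR hdegR (fun t ht => (hD1 t ht).dset)
    (fun t ht => Or.inl (hD1 t ht)) hneg

include hT in
/-- Any admissible factor can be moved to the canonical factor `(1, I)`. -/
lemma move_factor {ε : ℝ} (hε : ε ≠ 0) {q : ℂ × ℂ} {R : Polynomial ℂ} (hq : Dset q) (hR : UStable R)
    (hdegR : R.degree + 1 ≤ (n : WithBot ℕ))
    (hstrict : D1set q ∨ ∃ ρ : ℂ, ρ.im < 0 ∧ R.eval ρ = 0)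
    (hneg : ε * Sfun T (linfac q * R) Complex.I < 0) :
    ε * Sfun T (linfac ((1 : ℂ), Complex.I) * R) Complex.I < 0 := by
  -- Step A : from (u, I u) with u ≠ 0 we can reach (1, I)
  have stepIu : ∀ u : ℂ, u ≠ 0 →
      ε * Sfun T (linfac (u, Complex.I * u) * R) Complex.I < 0 →
      ε * Sfun T (linfac ((1 : ℂ), Complex.I) * R) Complex.I < 0 := by
    intro u hu hnegu
    have final : ε * Sfun T (linfac ((1:ℂ), Complex.I * 1) * R) Complex.I < 0 →
        ε * Sfun T (linfac ((1 : ℂ), Complex.I) * R) Complex.I < 0 := by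
      intro h
      simpa using h
    rcases lt_or_ge 0 u.re with hre | hre
    · -- direct segment u → 1
      refine final (seg_Iu n T hT hε hR hdegR (fun t ht => ?_) hnegu)
      intro h0
      have hre' : ((1-t) • u + t • (1:ℂ)).re = (1-t) * u.re + t := by
        simp [Complex.real_smul]
      rw [h0] at hre'
      simp only [Complex.zero_re] at hre'
      nlinarith [ht.1, ht.2, hre, mul_nonneg (sub_nonneg.mpr ht.2) hre.le, hre']
    rcases le_or_gt 0 u.im with him | him
    · -- u → I → 1
      have step1 : ε * Sfun T (linfac (Complex.I, Complex.I * Complex.I) * R) Complex.I < 0 := by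
        refine seg_Iu n T hT hε hR hdegR (fun t ht => ?_) hnegu
        intro h0
        have hQ : ((1-t) • u + t • Complex.I).im = (1-t) * u.im + t := by
          simp [Complex.real_smul]
        rcases eq_or_lt_of_le ht.1 with h1 | h1
        · rw [← h1] at h0; simp at h0; exact hu h0
        · rw [h0] at hQ
          simp only [Complex.zero_im] at hQ
          nlinarith [ht.2, him]
      refine final (seg_Iu n T hT hε hR hdegR (fun t ht => ?_) step1)
      intro h0
      have h1 : ((1-t) • Complex.I + t • (1:ℂ)).re = t := by
        simp [Complex.real_smul]
      have h2 : ((1-t) • Complex.I + t • (1:ℂ)).im = 1-t := by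
        simp [Complex.real_smul]
      rw [h0] at h1 h2
      simp at h1 h2
      linarith [h1, h2]
    · -- u → -I → 1
      have step1 : ε * Sfun T (linfac (-Complex.I, Complex.I * -Complex.I) * R) Complex.I < 0 := by
        refine seg_Iu n T hT hε hR hdegR (fun t ht => ?_) hnegu
        intro h0
        have hQ : ((1-t) • u + t • (-Complex.I)).im = (1-t) * u.im - t := by
          simp [Complex.real_smul]
          ring
        rw [h0] at hQ
        simp only [Complex.zero_im] at hQ
        rcases eq_or_lt_of_le ht.1 with h1 | h1
        · rw [← h1] at hQ; simp at hQ; nlinarith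
        · nlinarith [ht.2, him]
      refine final (seg_Iu n T hT hε hR hdegR (fun t ht => ?_) step1)
      intro h0
      have h1 : ((1-t) • (-Complex.I) + t • (1:ℂ)).re = t := by
        simp [Complex.real_smul]
      have h2 : ((1-t) • (-Complex.I) + t • (1:ℂ)).im = -(1-t) := by
        simp [Complex.real_smul]
      rw [h0] at h1 h2
      simp at h1 h2
      linarith [h1, h2]
  -- Step B : from any (u,v) with u ≠ 0 reach (u, I u)
  have stepMain : ∀ u v : ℂ, u ≠ 0 → Dset (u, v) →
      (D1set (u, v) ∨ ∃ ρ : ℂ, ρ.im < 0 ∧ R.eval ρ = 0) →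
      ε * Sfun T (linfac (u, v) * R) Complex.I < 0 →
      ε * Sfun T (linfac ((1 : ℂ), Complex.I) * R) Complex.I < 0 := by
    intro u v hu hquv hstrictuv hneguv
    have hnsqu : 0 < Complex.normSq u := by simpa [Complex.normSq_pos] using hu
    have him0 : 0 ≤ (v * (starRingEnd ℂ) u).im := hquv.im_nonneg hu
    -- Segment 1 : (u,v) → (u, v + I u)
    have hcomp1 : ∀ t : ℝ, ((1-t) • ((u, v) : ℂ × ℂ) + t • (u, v + Complex.I * u))
        = (u, v + t • (Complex.I * u)) := by
      intro t
      rw [Prod.ext_iff]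
      refine ⟨comb_same t u, ?_⟩
      show (1-t) • v + t • (v + Complex.I * u) = _
      simp only [Complex.real_smul]
      push_cast
      ring
    have him1 : ∀ t : ℝ, ((v + t • (Complex.I * u)) * (starRingEnd ℂ) u).im
        = (v * (starRingEnd ℂ) u).im + t * Complex.normSq u := by
      intro t
      have he : (v + t • (Complex.I * u)) * (starRingEnd ℂ) u
          = v * (starRingEnd ℂ) u + (t:ℂ) * Complex.I * (u * (starRingEnd ℂ) u) := by
        simp only [Complex.real_smul]
        ring
      rw [he, Complex.mul_conj]
      simp [Complex.add_im, Complex.mul_im, Complex.mul_re]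
    have hseg1 : ε * Sfun T (linfac (u, v + Complex.I * u) * R) Complex.I < 0 := by
      refine seg_transfer' n T hT hε hR hdegR (fun t ht => ?_) (fun t ht => ?_) hneguv
      · rw [hcomp1 t]
        refine Dset_of_nonneg hu ?_
        show 0 ≤ ((v + t • (Complex.I * u)) * (starRingEnd ℂ) u).im
        rw [him1 t]
        have hns := hnsqu
        nlinarith [mul_nonneg ht.1 hnsqu.le]
      · rw [hcomp1 t]
        rcases hstrictuv with h | h
        · left
          show 0 < ((v + t • (Complex.I * u)) * (starRingEnd ℂ) u).im
          rw [him1 t]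
          have hd1 : 0 < (v * (starRingEnd ℂ) u).im := h
          nlinarith [mul_nonneg ht.1 hnsqu.le]
        · exact Or.inr h
    -- Segment 2 : (u, v + I u) → (u, I u)
    have hcomp2 : ∀ t : ℝ, ((1-t) • ((u, v + Complex.I * u) : ℂ × ℂ) + t • (u, Complex.I * u))
        = (u, (1-t) • (v + Complex.I * u) + t • (Complex.I * u)) := by
      intro t
      rw [Prod.ext_iff]
      exact ⟨comb_same t u, rfl⟩
    have hseg2 : ε * Sfun T (linfac (u, Complex.I * u) * R) Complex.I < 0 := by
      have hbase : 0 < ((v + Complex.I * u) * (starRingEnd ℂ) u).im := by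
        have := him1 1
        simp only [one_smul] at this
        rw [this]
        nlinarith
      have hpos : ∀ t : ℝ, t ∈ Set.Icc (0:ℝ) 1 →
          0 < (((1-t) • (v + Complex.I * u) + t • (Complex.I * u))
            * (starRingEnd ℂ) u).im := by
        intro t ht
        have he : (((1-t) • (v + Complex.I * u) + t • (Complex.I * u)) * (starRingEnd ℂ) u)
            = ((1-t : ℝ) : ℂ) * ((v + Complex.I * u) * (starRingEnd ℂ) u)
              + ((t : ℝ) : ℂ) * (Complex.I * ((Complex.normSq u : ℝ) : ℂ)) := by
          rw [← Complex.mul_conj]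
          simp only [Complex.real_smul]
          push_cast
          ring
        have hr1 : ∀ (r : ℝ) (z : ℂ), ((r : ℂ) * z).im = r * z.im := by
          intro r z
          simp [Complex.mul_im]
        rw [he, Complex.add_im, hr1, hr1]
        have h2 : (Complex.I * ((Complex.normSq u : ℝ) : ℂ)).im = Complex.normSq u := by
          simp
        rw [h2]
        rcases eq_or_lt_of_le ht.2 with h1 | h1
        · rw [← h1]
          simp only [sub_self, zero_mul, zero_add, one_mul]
          nlinarith
        · nlinarith [mul_nonneg ht.1 hnsqu.le, mul_pos (by linarith : (0:ℝ) < 1 - t) hbase]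
      refine seg_transfer' n T hT hε hR hdegR (fun t ht => ?_) (fun t ht => ?_) hseg1
      · rw [hcomp2 t]
        exact (D1set.dset (hpos t ht))
      · rw [hcomp2 t]
        exact Or.inl (hpos t ht)
    exact stepIu u hu hseg2
  -- Step C : dispatch on whether q.1 = 0
  by_cases hu : q.1 = 0
  · have hv : q.2 ≠ 0 := hq.v_ne_zero hu
    have hRs : ∃ ρ : ℂ, ρ.im < 0 ∧ R.eval ρ = 0 := by
      rcases hstrict with h | h
      · exfalso
        rw [D1set, hu] at h
        simp at h
      · exact h
    have hq' : q = ((0:ℂ), q.2) := by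
      rw [Prod.ext_iff]
      exact ⟨hu, rfl⟩
    -- segment (0, v) → (-I v, v)
    have hcomp : ∀ t : ℝ, ((1-t) • (((0:ℂ), q.2) : ℂ × ℂ) + t • (-(Complex.I * q.2), q.2))
        = (t • (-(Complex.I * q.2)), q.2) := by
      intro t
      rw [Prod.ext_iff]
      constructor
      · show (1-t) • (0:ℂ) + t • (-(Complex.I * q.2)) = _
        simp
      · exact comb_same t q.2
    have hseg : ε * Sfun T (linfac (-(Complex.I * q.2), q.2) * R) Complex.I < 0 := by
      refine seg_transfer' n T hT hε (qa := ((0:ℂ), q.2)) (qb := (-(Complex.I * q.2), q.2))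
        hR hdegR (fun t ht => ?_) (fun t ht => Or.inr hRs) ?_
      · rw [hcomp t]
        rcases eq_or_lt_of_le ht.1 with h0 | h0
        · rw [← h0]
          simpa using (hq' ▸ hq)
        · apply D1set.dset
          show 0 < (q.2 * (starRingEnd ℂ) (t • (-(Complex.I * q.2)))).im
          have he : q.2 * (starRingEnd ℂ) (t • (-(Complex.I * q.2)))
              = (t:ℂ) * Complex.I * (q.2 * (starRingEnd ℂ) q.2) := by
            simp only [Complex.real_smul]
            rw [map_mul, map_neg, map_mul, Complex.conj_I, Complex.conj_ofReal]
            ring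
          rw [he, Complex.mul_conj]
          simp only [Complex.mul_im, Complex.mul_re, Complex.I_re, Complex.I_im,
            Complex.ofReal_re, Complex.ofReal_im, mul_zero, zero_mul, sub_zero, add_zero,
            zero_add, mul_one]
          have : 0 < Complex.normSq q.2 := by simpa [Complex.normSq_pos] using hv
          positivity
      · rw [← hq']
        exact hneg
    refine stepMain (-(Complex.I * q.2)) q.2 ?_ ?_ (Or.inr hRs) hseg
    · simpa using hv
    · apply D1set.dset
      show 0 < (q.2 * (starRingEnd ℂ) (-(Complex.I * q.2))).im
      have he : q.2 * (starRingEnd ℂ) (-(Complex.I * q.2))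
          = Complex.I * (q.2 * (starRingEnd ℂ) q.2) := by
        rw [map_neg, map_mul, Complex.conj_I]
        ring
      rw [he, Complex.mul_conj]
      simp only [Complex.mul_im, Complex.I_re, Complex.I_im, Complex.ofReal_re,
        Complex.ofReal_im, zero_mul, one_mul, mul_zero, add_zero, zero_add]
      have : 0 < Complex.normSq q.2 := by simpa [Complex.normSq_pos] using hv
      positivity
  · have hq2 : q = (q.1, q.2) := rfl
    refine stepMain q.1 q.2 hu (hq2 ▸ hq) (hq2 ▸ hstrict) (by rw [← hq2]; exact hneg)

end TSection4

lemma canon_eq : linfac ((1:ℂ), Complex.I) = Polynomial.X + Polynomial.C Complex.I := by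
  simp [linfac]

lemma UStable_canon : UStable (linfac ((1:ℂ), Complex.I)) :=
  UStable_linfac D1set_one_I.dset

lemma UStable.pow {p : Polynomial ℂ} (hp : UStable p) (k : ℕ) : UStable (p^k) := by
  induction k with
  | zero => intro z _; simp
  | succ k ih => rw [pow_succ]; exact ih.mul hp

lemma degree_canon_pow (k : ℕ) :
    ((linfac ((1:ℂ), Complex.I))^k).degree = (k : WithBot ℕ) := by
  rw [canon_eq, Polynomial.degree_pow, Polynomial.degree_X_add_C]
  simp

lemma canon_pow_root {k : ℕ} (hk : k ≠ 0) :
    ((linfac ((1:ℂ), Complex.I))^k).eval (-Complex.I) = 0 := by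
  rw [Polynomial.eval_pow, linfac_eval]
  simp [hk]

lemma UStable_list_prod {L : List (ℂ × ℂ)} (hL : ∀ q ∈ L, Dset q) :
    UStable (L.map linfac).prod := by
  induction L with
  | nil => intro z _; simp
  | cons q L' ih =>
    rw [List.map_cons, List.prod_cons]
    exact (UStable_linfac (hL q (List.mem_cons_self))).mul
      (ih fun p hp => hL p (List.mem_cons_of_mem q hp))

lemma degree_list_prod_le (L : List (ℂ × ℂ)) :
    (L.map linfac).prod.degree ≤ (L.length : WithBot ℕ) := by
  induction L with
  | nil => simp
  | cons q L' ih =>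
    rw [List.map_cons, List.prod_cons]
    refine le_trans (Polynomial.degree_mul_le _ _) ?_
    have : ((q :: L').length : WithBot ℕ) = 1 + (L'.length : WithBot ℕ) := by
      rw [List.length_cons]
      push_cast
      rw [add_comm]
    rw [this]
    exact add_le_add (degree_linfac_le q) ih

section TSection5

variable (n : ℕ) (T : Polynomial ℝ →ₗ[ℝ] Polynomial ℝ)
variable (hT : ∀ f : Polynomial ℝ, f.degree ≤ (n : WithBot ℕ) → Hyperbolic f →
      Hyperbolic (T f))

include hT in
lemma move_list {ε : ℝ} (hε : ε ≠ 0) :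
    ∀ (L : List (ℂ × ℂ)) (W : Polynomial ℂ),
    (∀ q ∈ L, Dset q) → UStable W → (∃ ρ : ℂ, ρ.im < 0 ∧ W.eval ρ = 0) →
    W.degree + (L.length : WithBot ℕ) ≤ (n : WithBot ℕ) →
    ε * Sfun T (W * (L.map linfac).prod) Complex.I < 0 →
    ε * Sfun T (W * (linfac ((1:ℂ), Complex.I))^(L.length)) Complex.I < 0 := by
  intro L
  induction L with
  | nil =>
    intro W _ _ _ _ h
    simpa using h
  | cons q L' ih =>
    intro W hL hW hWroot hdeg hneg
    have hq : Dset q := hL q (List.mem_cons_self)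
    have hL' : ∀ p ∈ L', Dset p := fun p hp => hL p (List.mem_cons_of_mem q hp)
    set R := W * (L'.map linfac).prod with hR
    have hprodL' : UStable (L'.map linfac).prod := UStable_list_prod hL'
    have hRst : UStable R := hW.mul hprodL'
    have hWdeg1 : W.degree + ((L'.length : ℕ) : WithBot ℕ) + 1 ≤ (n : WithBot ℕ) := by
      refine le_trans (le_of_eq ?_) hdeg
      rw [List.length_cons]
      push_cast
      rw [add_assoc]
    have hRdeg : R.degree + 1 ≤ (n : WithBot ℕ) := by
      refine le_trans ?_ hWdeg1
      refine add_le_add_left ?_ 1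
      refine le_trans (Polynomial.degree_mul_le _ _) ?_
      exact add_le_add_right (degree_list_prod_le L') _
    have heq1 : W * ((q :: L').map linfac).prod = linfac q * R := by
      rw [List.map_cons, List.prod_cons, hR]
      ring
    have hmf : ε * Sfun T (linfac ((1:ℂ), Complex.I) * R) Complex.I < 0 := by
      refine move_factor n T hT hε hq hRst hRdeg (Or.inr ?_) ?_
      · obtain ⟨ρ, hρ, hρev⟩ := hWroot
        exact ⟨ρ, hρ, by rw [hR, Polynomial.eval_mul, hρev, zero_mul]⟩
      · rw [← heq1]; exact hneg
    have heq2 : linfac ((1:ℂ), Complex.I) * R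
        = (W * linfac ((1:ℂ), Complex.I)) * (L'.map linfac).prod := by
      rw [hR]; ring
    rw [heq2] at hmf
    have hih := ih (W * linfac ((1:ℂ), Complex.I)) hL'
      (hW.mul UStable_canon)
      (by
        obtain ⟨ρ, hρ, hρev⟩ := hWroot
        exact ⟨ρ, hρ, by rw [Polynomial.eval_mul, hρev, zero_mul]⟩)
      (by
        refine le_trans ?_ hWdeg1
        have h1 : (W * linfac ((1:ℂ), Complex.I)).degree ≤ W.degree + 1 :=
          le_trans (Polynomial.degree_mul_le _ _) (add_le_add_right (degree_linfac_le _) _)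
        calc (W * linfac ((1:ℂ), Complex.I)).degree + ((L'.length : ℕ) : WithBot ℕ)
            ≤ W.degree + 1 + ((L'.length : ℕ) : WithBot ℕ) := add_le_add_left h1 _
          _ = W.degree + ((L'.length : ℕ) : WithBot ℕ) + 1 := by
              rw [add_assoc, add_assoc, add_comm 1]
      )
      hmf
    have heq3 : (W * linfac ((1:ℂ), Complex.I)) * (linfac ((1:ℂ), Complex.I))^(L'.length)
        = W * (linfac ((1:ℂ), Complex.I))^((q :: L').length) := by
      rw [List.length_cons, pow_succ]
      ring
    rw [heq3] at hih
    exact hih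

include hT in
lemma raise {ε : ℝ} (hε : ε ≠ 0) :
    ∀ (k d : ℕ), 1 ≤ d → d + k ≤ n →
    ε * Sfun T ((linfac ((1:ℂ), Complex.I))^d) Complex.I < 0 →
    ε * Sfun T ((linfac ((1:ℂ), Complex.I))^(d+k)) Complex.I < 0 := by
  intro k
  induction k with
  | zero => intro d _ _ h; simpa using h
  | succ k ih =>
    intro d hd hdk hneg
    have hstep := ih d hd (by omega) hneg
    have hmf : ε * Sfun T (linfac ((1:ℂ), Complex.I)
        * (linfac ((1:ℂ), Complex.I))^(d+k)) Complex.I < 0 := by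
      refine move_factor n T hT hε (q := ((0:ℂ), (1:ℂ))) (Dset_const one_ne_zero)
        (UStable_canon.pow _) ?_ (Or.inr ⟨-Complex.I, by norm_num, canon_pow_root (by omega)⟩) ?_
      · rw [degree_canon_pow]
        have : ((d+k : ℕ) : WithBot ℕ) + 1 = ((d+k+1 : ℕ) : WithBot ℕ) := by push_cast; ring
        rw [this]
        exact_mod_cast (by omega : d + k + 1 ≤ n)
      · have : linfac ((0:ℂ), (1:ℂ)) = 1 := by simp [linfac]
        rw [this, one_mul]
        exact hstep
    have : linfac ((1:ℂ), Complex.I) * (linfac ((1:ℂ), Complex.I))^(d+k)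
        = (linfac ((1:ℂ), Complex.I))^(d+(k+1)) := by
      rw [← pow_succ', Nat.add_assoc]
    rwa [this] at hmf

end TSection5

lemma linfac_one_neg (ρ : ℂ) : linfac ((1:ℂ), -ρ) = Polynomial.X - Polynomial.C ρ := by
  simp [linfac, sub_eq_add_neg]

lemma linfac_lc (lc ρ₀ : ℂ) :
    linfac (lc, -(lc * ρ₀)) = Polynomial.C lc * (Polynomial.X - Polynomial.C ρ₀) := by
  simp only [linfac, map_neg, Polynomial.C_mul]
  ring

section TSection6

variable (n : ℕ) (T : Polynomial ℝ →ₗ[ℝ] Polynomial ℝ)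
variable (hT : ∀ f : Polynomial ℝ, f.degree ≤ (n : WithBot ℕ) → Hyperbolic f →
      Hyperbolic (T f))

include hT in
lemma to_canon {ε : ℝ} (hε : ε ≠ 0) {f : Polynomial ℂ} (hGood : Good n f)
    (hneg : ε * Sfun T f Complex.I < 0) :
    ε * Sfun T ((linfac ((1:ℂ), Complex.I))^n) Complex.I < 0 := by
  obtain ⟨hst, hdeg, ρ₀, hρ₀, hroot⟩ := hGood
  have hf : f ≠ 0 := hst.ne_zero
  have hlc : f.leadingCoeff ≠ 0 := Polynomial.leadingCoeff_ne_zero.mpr hf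
  set d := f.natDegree with hd
  have hcard : Multiset.card f.roots = d :=
    Polynomial.splits_iff_card_roots.mp (IsAlgClosed.splits f)
  have hρ₀mem : ρ₀ ∈ f.roots := (Polynomial.mem_roots hf).mpr hroot
  obtain ⟨rest, hrest⟩ := Multiset.exists_cons_of_mem hρ₀mem
  set L : List ℂ := rest.toList with hL
  have hLcoe : (L : Multiset ℂ) = rest := Multiset.coe_toList rest
  have hlen : L.length = d - 1 := by
    have : Multiset.card rest = Multiset.card f.roots - 1 := by
      rw [hrest]; simp
    rw [hL, ← Multiset.coe_card, hLcoe, this, hcard]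
  have hd1 : 1 ≤ d := by
    have : 0 < Multiset.card f.roots := by
      rw [hrest]
      simp
    omega
  have hdn : d ≤ n := Polynomial.natDegree_le_iff_degree_le.mpr hdeg
  -- the representation f = W * prod of factors
  set W : Polynomial ℂ := linfac (f.leadingCoeff, -(f.leadingCoeff * ρ₀)) with hW
  set Lfac : List (ℂ × ℂ) := L.map (fun ρ => ((1:ℂ), -ρ)) with hLfac
  have hrep : f = W * (Lfac.map linfac).prod := by
    conv_lhs => rw [← Polynomial.C_leadingCoeff_mul_prod_multiset_X_sub_C hcard]
    rw [hrest, Multiset.map_cons, Multiset.prod_cons]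
    rw [hW, linfac_lc]
    have h1 : (Lfac.map linfac) = L.map (fun ρ => Polynomial.X - Polynomial.C ρ) := by
      rw [hLfac, List.map_map]
      apply List.map_congr_left
      intro ρ _
      exact linfac_one_neg ρ
    rw [h1]
    have h2 : (Multiset.map (fun a => Polynomial.X - Polynomial.C a) rest).prod
        = (L.map (fun ρ => Polynomial.X - Polynomial.C ρ)).prod := by
      rw [← hLcoe]
      rfl
    rw [h2]
    ring
  -- side conditions
  have hrootsim : ∀ ρ ∈ f.roots, ρ.im ≤ 0 := fun ρ hρ =>
    hst.root_im_le ((Polynomial.mem_roots hf).mp hρ)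
  have hLfacD : ∀ q ∈ Lfac, Dset q := by
    intro q hq
    rw [hLfac] at hq
    obtain ⟨ρ, hρL, rfl⟩ := List.mem_map.mp hq
    have hρroot : ρ ∈ f.roots := by
      rw [hrest]
      refine Multiset.mem_cons_of_mem ?_
      rw [← hLcoe]
      exact_mod_cast hρL
    refine Dset_of_nonneg one_ne_zero ?_
    show 0 ≤ ((-ρ) * (starRingEnd ℂ) 1).im
    simp only [map_one, mul_one, Complex.neg_im]
    linarith [hrootsim ρ hρroot]
  have hWD1 : D1set (f.leadingCoeff, -(f.leadingCoeff * ρ₀)) := by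
    rw [D1set]
    have he : -(f.leadingCoeff * ρ₀) * (starRingEnd ℂ) f.leadingCoeff
        = -(ρ₀ * (f.leadingCoeff * (starRingEnd ℂ) f.leadingCoeff)) := by ring
    show 0 < (-(f.leadingCoeff * ρ₀) * (starRingEnd ℂ) f.leadingCoeff).im
    rw [he, Complex.mul_conj]
    simp only [Complex.neg_im, Complex.mul_im, Complex.ofReal_re, Complex.ofReal_im]
    have : 0 < Complex.normSq f.leadingCoeff := by simpa [Complex.normSq_pos] using hlc
    nlinarith
  have hWst : UStable W := by
    rw [hW]
    exact UStable_linfac hWD1.dset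
  have hWroot : ∃ ρ : ℂ, ρ.im < 0 ∧ W.eval ρ = 0 := by
    rw [hW]
    exact hWD1.root
  have hLfaclen : Lfac.length = d - 1 := by
    rw [hLfac, List.length_map, hlen]
  have hWdeg : W.degree + (Lfac.length : WithBot ℕ) ≤ (n : WithBot ℕ) := by
    rw [hLfaclen]
    calc W.degree + ((d - 1 : ℕ) : WithBot ℕ)
        ≤ 1 + ((d - 1 : ℕ) : WithBot ℕ) := add_le_add_left (by rw [hW]; exact degree_linfac_le _) _
      _ = ((1 + (d - 1) : ℕ) : WithBot ℕ) := by push_cast; ring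
      _ = ((d : ℕ) : WithBot ℕ) := by congr 1; omega
      _ ≤ (n : WithBot ℕ) := by exact_mod_cast hdn
  -- move the list, then the leading factor, then raise the power
  have hstep1 : ε * Sfun T (W * (linfac ((1:ℂ), Complex.I))^(Lfac.length)) Complex.I < 0 := by
    refine move_list n T hT hε Lfac W hLfacD hWst hWroot hWdeg ?_
    rw [← hrep]
    exact hneg
  have hstep2 : ε * Sfun T ((linfac ((1:ℂ), Complex.I))^d) Complex.I < 0 := by
    have hmf : ε * Sfun T (linfac ((1:ℂ), Complex.I)
        * (linfac ((1:ℂ), Complex.I))^(Lfac.length)) Complex.I < 0 := by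
      refine move_factor n T hT hε (q := (f.leadingCoeff, -(f.leadingCoeff * ρ₀)))
        hWD1.dset (UStable_canon.pow _) ?_ (Or.inl hWD1) ?_
      · rw [degree_canon_pow, hLfaclen]
        calc ((d - 1 : ℕ) : WithBot ℕ) + 1 = ((d - 1 + 1 : ℕ) : WithBot ℕ) := by push_cast; ring
          _ = ((d : ℕ) : WithBot ℕ) := by congr 1; omega
          _ ≤ (n : WithBot ℕ) := by exact_mod_cast hdn
      · rw [← hW]
        exact hstep1
    rw [← pow_succ'] at hmf
    have : Lfac.length + 1 = d := by omega
    rwa [this] at hmf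
  have := raise n T hT hε (n - d) d hd1 (by omega) hstep2
  have hnd : d + (n - d) = n := by omega
  rwa [hnd] at this

end TSection6

section TSection7

variable (n : ℕ) (T : Polynomial ℝ →ₗ[ℝ] Polynomial ℝ)
variable (hT : ∀ f : Polynomial ℝ, f.degree ≤ (n : WithBot ℕ) → Hyperbolic f →
      Hyperbolic (T f))

include hT in
/-- If a stable `f` has no root in the open lower half-plane (all roots real), then
`complexify T f` does not vanish off the real axis. -/
lemma no_strict_root_case {f : Polynomial ℂ} (hst : UStable f)
    (hdeg : f.degree ≤ (n : WithBot ℕ))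
    (hnostrict : ∀ ρ : ℂ, ρ.im < 0 → f.eval ρ ≠ 0) :
    ∀ z : ℂ, z.im ≠ 0 → (complexify T f).eval z ≠ 0 := by
  have hf : f ≠ 0 := hst.ne_zero
  have hlc : f.leadingCoeff ≠ 0 := Polynomial.leadingCoeff_ne_zero.mpr hf
  have hcard : Multiset.card f.roots = f.natDegree :=
    Polynomial.splits_iff_card_roots.mp (IsAlgClosed.splits f)
  have hrootsreal : ∀ ρ ∈ f.roots, ρ.im = 0 := by
    intro ρ hρ
    have h1 : f.eval ρ = 0 := (Polynomial.mem_roots hf).mp hρ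
    have h2 : ρ.im ≤ 0 := hst.root_im_le h1
    rcases lt_or_eq_of_le h2 with h3 | h3
    · exact absurd h1 (hnostrict ρ h3)
    · exact h3
  set r : Polynomial ℝ := (f.roots.map (fun ρ => Polynomial.X - Polynomial.C ρ.re)).prod with hr
  have hmap : r.map (algebraMap ℝ ℂ)
      = (f.roots.map (fun ρ => Polynomial.X - Polynomial.C ρ)).prod := by
    rw [hr]
    have h1 : (Polynomial.mapRingHom (algebraMap ℝ ℂ))
          ((f.roots.map (fun ρ => Polynomial.X - Polynomial.C ρ.re)).prod)
        = ((f.roots.map (fun ρ => Polynomial.X - Polynomial.C ρ.re)).map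
            (Polynomial.mapRingHom (algebraMap ℝ ℂ))).prod :=
      map_multiset_prod _ _
    rw [show r.map (algebraMap ℝ ℂ) = (Polynomial.mapRingHom (algebraMap ℝ ℂ)) r from rfl, hr] at *
    rw [h1, Multiset.map_map]
    congr 1
    apply Multiset.map_congr rfl
    intro ρ hρ
    simp only [Function.comp_apply, Polynomial.coe_mapRingHom, Polynomial.map_sub,
      Polynomial.map_X, Polynomial.map_C]
    congr 1
    have h2 : (algebraMap ℝ ℂ) ρ.re = (ρ.re : ℂ) := rfl
    have hρeq : ((ρ.re : ℝ) : ℂ) = ρ := by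
      rw [Complex.ext_iff]
      exact ⟨by simp, by simp [hrootsreal ρ hρ]⟩
    rw [h2, hρeq]
  have hfeq : f = Polynomial.C f.leadingCoeff * r.map (algebraMap ℝ ℂ) := by
    conv_lhs => rw [← Polynomial.C_leadingCoeff_mul_prod_multiset_X_sub_C hcard]
    rw [hmap]
  have hmonic : r.Monic := by
    rw [hr]
    apply Polynomial.monic_multiset_prod_of_monic
    intro ρ _
    exact Polynomial.monic_X_sub_C ρ.re
  have hr0 : r ≠ 0 := hmonic.ne_zero
  have hdegmap : (r.map (algebraMap ℝ ℂ)).degree = r.degree :=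
    Polynomial.degree_map_eq_of_injective (by
      intro a b hab
      exact Complex.ofReal_injective hab) r
  have hdegr : r.degree ≤ (n : WithBot ℕ) := by
    have h1 : f.degree = (r.map (algebraMap ℝ ℂ)).degree := by
      rw [hfeq, Polynomial.degree_mul, Polynomial.degree_C hlc, zero_add]
    rw [← hdegmap, ← h1]
    exact hdeg
  have hrhyp : Hyperbolic r := by
    refine ⟨hr0, ?_⟩
    intro z hz
    rw [Polynomial.aeval_def, Polynomial.eval₂_eq_eval_map] at hz
    have h1 : f.eval z = 0 := by
      rw [hfeq, Polynomial.eval_mul, hz, mul_zero]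
    have h2 := hst.root_im_le h1
    rcases lt_or_eq_of_le h2 with h3 | h3
    · exact absurd h1 (hnostrict z h3)
    · exact h3
  have hcoeff : ∀ k, f.coeff k = f.leadingCoeff * ((r.coeff k : ℝ) : ℂ) := by
    intro k
    conv_lhs => rw [hfeq]
    rw [Polynomial.coeff_C_mul, Polynomial.coeff_map]
    rfl
  have hrePoly : rePoly f = f.leadingCoeff.re • r := by
    ext k
    rw [coeff_rePoly, hcoeff k, Polynomial.coeff_smul, smul_eq_mul]
    simp [Complex.mul_re]
  have himPoly : imPoly f = f.leadingCoeff.im • r := by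
    ext k
    rw [coeff_imPoly, hcoeff k, Polynomial.coeff_smul, smul_eq_mul]
    simp [Complex.mul_im]
  have hCT : complexify T f = f.leadingCoeff • ((T r).map (algebraMap ℝ ℂ)) := by
    rw [complexify, hrePoly, himPoly, map_smul, map_smul, map_smul_real, map_smul_real]
    rw [smul_smul, ← add_smul]
    congr 1
    rw [Complex.ext_iff]
    constructor <;> simp
  have hTr : Hyperbolic (T r) := hT r hdegr hrhyp
  intro z hz
  rw [hCT, Polynomial.eval_smul, smul_eq_mul]
  apply mul_ne_zero hlc
  intro h0
  have : Polynomial.aeval z (T r) = 0 := by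
    rw [Polynomial.aeval_def, Polynomial.eval₂_eq_eval_map]
    exact h0
  exact hz (hTr.2 z this)

end TSection7


/-- **Lemma (trichotomy).** If `T : ℝ_n[z] → ℝ[z]` maps every hyperbolic polynomial of
degree at most `n` to a hyperbolic polynomial then (extending `T` by complex
linearity) either `T` maps every stable polynomial of degree at most `n` to a stable
polynomial or `0`, or `T` maps every such stable polynomial into `H₁⁻(ℂ) ∪ {0}`, or
`T` has range of dimension at most two and `T(f) = α(f)P + β(f)Q` with `α, β` linear
functionals and `P, Q` hyperbolic with interlacing zeros. -/
theorem stmt_16 (n : ℕ) (T : Polynomial ℝ →ₗ[ℝ] Polynomial ℝ)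
    (hT : ∀ f : Polynomial ℝ, f.degree ≤ (n : WithBot ℕ) → Hyperbolic f →
      Hyperbolic (T f)) :
    (∀ f : Polynomial ℂ, f.degree ≤ (n : WithBot ℕ) → UStable f →
      (UStable (complexify T f) ∨ complexify T f = 0)) ∨
    (∀ f : Polynomial ℂ, f.degree ≤ (n : WithBot ℕ) → UStable f →
      ((∀ z : ℂ, z.im < 0 → (complexify T f).eval z ≠ 0) ∨ complexify T f = 0)) ∨
    (∃ (α β : Polynomial ℝ →ₗ[ℝ] ℝ) (P Q : Polynomial ℝ),
      Hyperbolic P ∧ Hyperbolic Q ∧ ZerosInterlace P Q ∧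
      ∀ f : Polynomial ℝ, f.degree ≤ (n : WithBot ℕ) → T f = α f • P + β f • Q) := by
  by_cases hb1 : (∀ f : Polynomial ℂ, f.degree ≤ (n : WithBot ℕ) → UStable f →
      (UStable (complexify T f) ∨ complexify T f = 0))
  · exact Or.inl hb1
  · refine Or.inr (Or.inl ?_)
    push_neg at hb1
    obtain ⟨f₀, hdeg₀, hst₀, hnst, hne0⟩ := hb1
    rw [UStable] at hnst
    push_neg at hnst
    obtain ⟨z₀, hz₀im, hz₀ev⟩ := hnst
    have hstrict₀ : ∃ ρ : ℂ, ρ.im < 0 ∧ f₀.eval ρ = 0 := by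
      by_contra hno
      push_neg at hno
      exact no_strict_root_case n T hT hst₀ hdeg₀ hno z₀ (ne_of_gt hz₀im) hz₀ev
    obtain ⟨ρ₀, hρ₀, hρ₀ev⟩ := hstrict₀
    have hGood₀ : Good n f₀ := ⟨hst₀, hdeg₀, ρ₀, hρ₀, hρ₀ev⟩
    have hSneg : Sfun T f₀ z₀ < 0 := by
      have hne := Sfun_ne_zero n T hT hGood₀ hz₀im
      have hle : Sfun T f₀ z₀ ≤ 0 := by
        rw [Sfun, hz₀ev]
        have : Complex.abs 0 = 0 := by simp
        rw [this]
        have h2 : (0:ℝ)^2 = 0 := by norm_num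
        rw [h2, zero_sub, neg_nonpos]
        positivity
      rcases lt_or_eq_of_le hle with h | h
      · exact h
      · exact absurd h hne
    have hSi : Sfun T f₀ Complex.I < 0 :=
      Sfun_sign_transfer n T hT hGood₀ hz₀im (by simp) hSneg
    have hCanon : (1:ℝ) * Sfun T ((linfac ((1:ℂ), Complex.I))^n) Complex.I < 0 := by
      apply to_canon n T hT one_ne_zero hGood₀
      rw [one_mul]
      exact hSi
    intro f hdegf hstf
    left
    intro w hwim
    by_cases hstrictf : ∃ ρ : ℂ, ρ.im < 0 ∧ f.eval ρ = 0
    · obtain ⟨ρ, hρ, hρev⟩ := hstrictf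
      have hGood : Good n f := ⟨hstf, hdegf, ρ, hρ, hρev⟩
      intro h0
      have hwc : 0 < ((starRingEnd ℂ) w).im := by
        rw [Complex.conj_im]
        linarith
      have hSpos : 0 < Sfun T f ((starRingEnd ℂ) w) := by
        have hne := Sfun_ne_zero n T hT hGood hwc
        have hge : 0 ≤ Sfun T f ((starRingEnd ℂ) w) := by
          rw [Sfun]
          rw [Complex.conj_conj, h0]
          have : Complex.abs 0 = 0 := by simp
          rw [this]
          have h2 : (0:ℝ)^2 = 0 := by norm_num
          rw [h2, sub_zero]
          positivity
        rcases lt_or_eq_of_le hge with h | h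
        · exact h
        · exact absurd h.symm hne
      have hSiposf : 0 < Sfun T f Complex.I := by
        rcases lt_trichotomy (Sfun T f Complex.I) 0 with h | h | h
        · have := Sfun_sign_transfer n T hT hGood (by simp) hwc h
          linarith
        · exact absurd h (Sfun_ne_zero n T hT hGood (by simp))
        · exact h
      have hcontr : (-1 : ℝ) * Sfun T ((linfac ((1:ℂ), Complex.I))^n) Complex.I < 0 := by
        apply to_canon n T hT (by norm_num) hGood
        nlinarith
      nlinarith [hCanon]
    · push_neg at hstrictf
      exact no_strict_root_case n T hT hstf hdegf hstrictf w (ne_of_lt hwim)
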